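/- arXiv:1203.3238 — 2 statements merged into one kernel-verified Lean document; each statement's English description precedes it below -/
import Mathlib

section
/- Let q₁, …, q_k be odd positive integers. Then there exists an odd positive integer q such that for every subset T ⊆ {1, …, k}, the integer (q² + 1) · ∏_{i ∈ T} (q_i² + 1) is not a perfect square. (This expresses that the class of q² + 1 in the group of positive rationals modulo squares does not lie in the subgroup generated by the classes of the q_i² + 1.) -/
lemma aux_even_factorization {n p : ℕ} (hn : n ≠ 0) (h : IsSquare n) :
    Even (n.factorization p) := by
  obtain ⟨r, rfl⟩ := h
  have hr : r ≠ 0 := by rintro rfl; simp at hn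
  rw [Nat.factorization_mul hr hr]
  exact ⟨r.factorization p, rfl⟩

/-- Let `q₁, …, q_k` be odd positive integers.  Then there is an odd positive integer
`q` such that for every subset `T ⊆ {1, …, k}` the number
`(q² + 1) · ∏_{i ∈ T} (q_i² + 1)` is not a perfect square; i.e. the class of `q² + 1`
modulo squares lies outside the subgroup generated by the classes of the `q_i² + 1`. -/
theorem stmt6 (k : ℕ) (qs : Fin k → ℕ) (hodd : ∀ i, Odd (qs i)) (hpos : ∀ i, 0 < qs i) :
    ∃ q : ℕ, Odd q ∧ 0 < q ∧
      ∀ T : Finset (Fin k), ¬ IsSquare ((q ^ 2 + 1) * ∏ i ∈ T, (qs i ^ 2 + 1)) := by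
  classical
  set N : ℕ := Finset.univ.sup (fun i => qs i ^ 2 + 1) with hN
  obtain ⟨p, hp, hNp, hp1⟩ := Nat.exists_prime_gt_modEq_one N (by norm_num : (4:ℕ) ≠ 0)
  have hp4 : p % 4 = 1 := by simpa [Nat.ModEq] using hp1
  have hp5 : 2 ≤ p := hp.two_le
  have hpodd : Odd p := Nat.odd_iff.mpr (by omega)
  haveI : Fact p.Prime := ⟨hp⟩
  -- square root of -1 mod p
  obtain ⟨z, hz⟩ : IsSquare (-1 : ZMod p) :=
    ZMod.exists_sq_eq_neg_one_iff.mpr (by omega)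
  set r : ℕ := z.val with hr
  have hpr : p ∣ r ^ 2 + 1 := by
    have : ((r ^ 2 + 1 : ℕ) : ZMod p) = 0 := by
      push_cast
      rw [hr, ZMod.natCast_val, ZMod.cast_id]
      rw [show z ^ 2 = z * z by ring, ← hz]; ring
    exact (ZMod.natCast_eq_zero_iff _ _).mp this
  -- choose s with p ∣ s²+1 but ¬ p² ∣ s²+1
  have hkey : ∃ s : ℕ, p ∣ s ^ 2 + 1 ∧ ¬ p ^ 2 ∣ s ^ 2 + 1 := by
    by_cases h2 : p ^ 2 ∣ r ^ 2 + 1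
    · refine ⟨r + p, ?_, ?_⟩
      · have : (r + p) ^ 2 + 1 = (r ^ 2 + 1) + p * (2 * r + p) := by ring
        rw [this]; exact Nat.dvd_add hpr (Dvd.intro _ rfl)
      · intro hcon
        have heq : (r + p) ^ 2 + 1 = (r ^ 2 + 1) + p * (2 * r + p) := by ring
        rw [heq] at hcon
        have h3 : p ^ 2 ∣ p * (2 * r + p) := (Nat.dvd_add_right h2).mp hcon
        have h4 : p ∣ 2 * r + p := by
          rcases h3 with ⟨c, hc⟩
          have hp0 : 0 < p := hp.pos
          have : p * (2 * r + p) = p * (p * c) := by rw [hc]; ring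
          exact ⟨c, Nat.eq_of_mul_eq_mul_left hp0 this⟩
        have h5 : p ∣ 2 * r := (Nat.dvd_add_iff_left (dvd_refl p)).mpr h4
        have h6 : p ∣ r := by
          rcases (Nat.Prime.dvd_mul hp).mp h5 with h | h
          · exact absurd (Nat.le_of_dvd (by norm_num) h) (by omega)
          · exact h
        have h7 : p ∣ r ^ 2 := Dvd.dvd.pow h6 (by norm_num)
        have : p ∣ 1 := (Nat.dvd_add_right h7).mp hpr
        have := Nat.le_of_dvd one_pos this; omega
    · exact ⟨r, hpr, h2⟩
  obtain ⟨s, hs1, hs2⟩ := hkey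
  -- fix parity
  set q : ℕ := if Odd s then s else s + p ^ 2 with hq
  have hqodd : Odd q := by
    rw [hq]; split_ifs with h
    · exact h
    · have : Even s := Nat.not_odd_iff_even.mp h
      exact this.add_odd (hpodd.pow)
  have hqmod : q ≡ s [MOD p ^ 2] := by
    rw [hq]; split_ifs
    · rfl
    · exact (Nat.modEq_iff_dvd' (Nat.le_add_right _ _)).mpr (by simp) |>.symm
  have hqs : q ^ 2 + 1 ≡ s ^ 2 + 1 [MOD p ^ 2] := (hqmod.pow 2).add_right 1
  have hq1 : p ∣ q ^ 2 + 1 := by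
    have h := (hqs.of_dvd (dvd_pow_self p (by norm_num : (2:ℕ) ≠ 0)))
    have := (Nat.modEq_zero_iff_dvd).mpr hs1
    exact (Nat.modEq_zero_iff_dvd).mp (h.trans this)
  have hq2 : ¬ p ^ 2 ∣ q ^ 2 + 1 := by
    intro hcon
    exact hs2 ((Nat.modEq_zero_iff_dvd).mp
      ((hqs.symm).trans ((Nat.modEq_zero_iff_dvd).mpr hcon)))
  have hqpos : 0 < q := hqodd.pos
  refine ⟨q, hqodd, hqpos, ?_⟩
  intro T hsq
  have hqne : q ^ 2 + 1 ≠ 0 := by positivity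
  have hprodne : (∏ i ∈ T, (qs i ^ 2 + 1)) ≠ 0 := by positivity
  have hMne : (q ^ 2 + 1) * ∏ i ∈ T, (qs i ^ 2 + 1) ≠ 0 := mul_ne_zero hqne hprodne
  have heven := aux_even_factorization (p := p) hMne hsq
  rw [Nat.factorization_mul hqne hprodne] at heven
  have hprod0 : (∏ i ∈ T, (qs i ^ 2 + 1)).factorization p = 0 := by
    rw [Nat.factorization_prod (fun i _ => by positivity)]
    simp only [Finset.sum_apply']
    refine Finset.sum_eq_zero fun i _ => ?_
    refine Nat.factorization_eq_zero_of_not_dvd fun hdvd => ?_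
    have hle : qs i ^ 2 + 1 ≤ N := Finset.le_sup (f := fun i => qs i ^ 2 + 1) (Finset.mem_univ i)
    have := Nat.le_of_dvd (by positivity) hdvd
    omega
  have hf1 : (q ^ 2 + 1).factorization p = 1 := by
    have h1 : 1 ≤ (q ^ 2 + 1).factorization p := by
      rw [← hp.pow_dvd_iff_le_factorization hqne]; simpa using hq1
    have h2 : ¬ 2 ≤ (q ^ 2 + 1).factorization p := by
      rw [← hp.pow_dvd_iff_le_factorization hqne]; exact hq2
    omega
  rw [Finsupp.add_apply, hprod0, hf1] at heven
  norm_num at heven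
end

section
/- In the quotient of the multiplicative group of nonzero rationals ℚˣ by its subgroup of squares (ℚˣ)², the subgroup generated by the images of the integers q² + 1, as q ranges over all odd positive integers, is not finitely generated (equivalently, it is an infinite subgroup in which every element has order dividing 2). -/
open Multiplicative

/-- valuation-mod-2 homomorphism. -/
def valHom (p : ℕ) [Fact p.Prime] : ℚˣ →* Multiplicative (ZMod 2) where
  toFun u := ofAdd ((padicValRat p (u : ℚ) : ZMod 2))
  map_one' := by simp
  map_mul' u v := by
    show ofAdd ((padicValRat p ((u * v : ℚˣ) : ℚ) : ZMod 2)) = _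
    rw [← ofAdd_add]
    congr 1
    rw [Units.val_mul, padicValRat.mul u.ne_zero v.ne_zero]
    push_cast
    ring

lemma valHom_ker (p : ℕ) [Fact p.Prime] :
    ∀ u ∈ (powMonoidHom 2 : ℚˣ →* ℚˣ).range, valHom p u = 1 := by
  rintro u hu
  rw [MonoidHom.mem_range] at hu
  obtain ⟨v, rfl⟩ := hu
  show ofAdd ((padicValRat p ((powMonoidHom 2 v : ℚˣ) : ℚ) : ZMod 2)) = 1
  have : ((powMonoidHom 2 v : ℚˣ) : ℚ) = (v : ℚ) ^ 2 := rfl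
  rw [this, padicValRat.pow, ofAdd_eq_one]
  push_cast
  rw [show ((2 : ZMod 2)) = 0 by decide, zero_mul]

lemma val_step (p q0 : ℕ) (hp : p.Prime) (hdvd0 : p ∣ q0 ^ 2 + 1) (hndvd0 : ¬ p ∣ q0)
    (hp2 : p ≠ 2) (hc : p ^ 2 ∣ q0 ^ 2 + 1) : ¬ p ^ 2 ∣ (q0 + p) ^ 2 + 1 := by
  intro hcon
  have heq : (q0 + p) ^ 2 + 1 = (q0 ^ 2 + 1) + p * (2 * q0 + p) := by ring
  rw [heq] at hcon
  have h5 : p ^ 2 ∣ p * (2 * q0 + p) := by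
    have := Nat.dvd_sub hcon hc
    simpa using this
  have h6 : p ∣ 2 * q0 + p := by
    rw [pow_two] at h5
    exact (mul_dvd_mul_iff_left (by exact_mod_cast hp.ne_zero : (p : ℕ) ≠ 0)).mp h5
  have h7 : p ∣ 2 * q0 := (Nat.dvd_add_iff_left (dvd_refl p)).mpr h6
  rcases (Nat.Prime.dvd_mul hp).mp h7 with h | h
  · exact hp2 ((Nat.prime_dvd_prime_iff_eq hp Nat.prime_two).mp h)
  · exact hndvd0 h

lemma exists_good_q (p : ℕ) (hp : p.Prime) (h4 : p % 4 = 1) :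
    ∃ q : ℕ, Odd q ∧ 0 < q ∧ p ∣ q ^ 2 + 1 ∧ ¬ p ^ 2 ∣ q ^ 2 + 1 := by
  haveI : Fact p.Prime := ⟨hp⟩
  have hp2 : p ≠ 2 := by rintro rfl; omega
  have hpodd : Odd p := hp.odd_of_ne_two hp2
  obtain ⟨y, hy⟩ : IsSquare (-1 : ZMod p) := by
    rw [ZMod.exists_sq_eq_neg_one_iff]; omega
  set q0 := y.val with hq0
  have hdvd0 : p ∣ q0 ^ 2 + 1 := by
    have : ((q0 ^ 2 + 1 : ℕ) : ZMod p) = 0 := by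
      push_cast
      rw [ZMod.natCast_val, ZMod.cast_id, sq, ← hy]; ring
    exact (ZMod.natCast_eq_zero_iff _ _).mp this
  have hndvd0 : ¬ p ∣ q0 := by
    intro h
    have h1 : p ∣ q0 ^ 2 := Dvd.dvd.pow h two_ne_zero
    have h2 : p ∣ (q0 ^ 2 + 1) - q0 ^ 2 := Nat.dvd_sub hdvd0 h1
    rw [show (q0 ^ 2 + 1) - q0 ^ 2 = 1 by omega] at h2
    exact hp.one_lt.ne' (Nat.dvd_one.mp h2)
  -- step 1 : r with p ∣ r²+1, ¬p² ∣ r²+1, ¬ p ∣ r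
  obtain ⟨r, hr1, hr2, hr3⟩ :
      ∃ r : ℕ, p ∣ r ^ 2 + 1 ∧ ¬ p ^ 2 ∣ r ^ 2 + 1 ∧ ¬ p ∣ r := by
    by_cases hc : p ^ 2 ∣ q0 ^ 2 + 1
    · refine ⟨q0 + p, ?_, val_step p q0 hp hdvd0 hndvd0 hp2 hc, ?_⟩
      · have heq : (q0 + p) ^ 2 + 1 = (q0 ^ 2 + 1) + p * (2 * q0 + p) := by ring
        rw [heq]
        exact Nat.dvd_add hdvd0 (Dvd.intro _ rfl)
      · intro h
        exact hndvd0 ((Nat.dvd_add_iff_left (dvd_refl p)).mpr h)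
    · exact ⟨q0, hdvd0, hc, hndvd0⟩
  -- step 2 : fix parity using r ↦ r + p²
  have key : ∀ s : ℕ, p ∣ s ^ 2 + 1 → ¬ p ^ 2 ∣ s ^ 2 + 1 →
      p ∣ (s + p ^ 2) ^ 2 + 1 ∧ ¬ p ^ 2 ∣ (s + p ^ 2) ^ 2 + 1 := by
    intro s h1 h2
    have heq : (s + p ^ 2) ^ 2 + 1 = (s ^ 2 + 1) + p ^ 2 * (2 * s + p ^ 2) := by ring
    constructor
    · rw [heq]
      exact Nat.dvd_add h1 (dvd_mul_of_dvd_left (dvd_pow_self p two_ne_zero) _)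
    · rw [heq]
      intro h
      exact h2 ((Nat.dvd_add_iff_left (Dvd.intro _ rfl)).mpr h)
  have hrpos : 0 < r := by
    rcases Nat.eq_zero_or_pos r with h | h
    · exfalso; apply hr3; simp [h]
    · exact h
  rcases Nat.even_or_odd r with he | ho
  · refine ⟨r + p ^ 2, ?_, by positivity, (key r hr1 hr2).1, (key r hr1 hr2).2⟩
    exact he.add_odd (hpodd.pow)
  · exact ⟨r, ho, hrpos, hr1, hr2⟩

lemma padicValNat_eq_one {p n : ℕ} (hp : p.Prime) (h1 : p ∣ n) (h2 : ¬ p ^ 2 ∣ n)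
    (hn : n ≠ 0) : padicValNat p n = 1 := by
  have ha : 1 ≤ n.factorization p := by
    rw [← hp.pow_dvd_iff_le_factorization hn, pow_one]; exact h1
  have hb : ¬ 2 ≤ n.factorization p := by
    rw [← hp.pow_dvd_iff_le_factorization hn]; exact h2
  have := Nat.factorization_def n hp
  omega

/-- In `ℚˣ/(ℚˣ)²` (the quotient of the multiplicative group of nonzero rationals by its
subgroup of squares, i.e. the range of the squaring homomorphism), the subgroup
generated by the classes of the integers `q² + 1`, as `q` ranges over all odd positive
natural numbers, is not finitely generated. -/
theorem stmt7 :
    ¬ Subgroup.FG (Subgroup.closure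
      {x : ℚˣ ⧸ (powMonoidHom 2 : ℚˣ →* ℚˣ).range |
        ∃ q : ℕ, Odd q ∧ 0 < q ∧
          x = QuotientGroup.mk (Units.mk0 ((q : ℚ) ^ 2 + 1) (by positivity))}) := by
  intro hFG
  set G := ℚˣ ⧸ (powMonoidHom 2 : ℚˣ →* ℚˣ).range with hG
  set S : Set G := {x : G |
        ∃ q : ℕ, Odd q ∧ 0 < q ∧
          x = QuotientGroup.mk (Units.mk0 ((q : ℚ) ^ 2 + 1) (by positivity))} with hS
  haveI : Group.FG (Subgroup.closure S) := (Group.fg_iff_subgroup_fg _).mpr hFG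
  have htor : Monoid.IsTorsion (Subgroup.closure S) := by
    intro x
    refine isOfFinOrder_iff_pow_eq_one.mpr ⟨2, by norm_num, ?_⟩
    have hx : (x : G) ^ 2 = 1 := by
      obtain ⟨u, hu⟩ := QuotientGroup.mk_surjective (x : G)
      rw [← hu, ← QuotientGroup.mk_pow, QuotientGroup.eq_one_iff]
      exact ⟨u, rfl⟩
    ext
    simpa using hx
  haveI : Finite (Subgroup.closure S) := CommGroup.finite_of_fg_torsion _ htor
  have hSfin : S.Finite :=
    Set.Finite.subset ((Subgroup.closure S : Set G)).toFinite Subgroup.subset_closure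
  -- choose a big prime
  set f : G → ℕ := fun x => ((x.out : ℚˣ) : ℚ).num.natAbs + ((x.out : ℚˣ) : ℚ).den with hf
  set N : ℕ := hSfin.toFinset.sup f with hN
  obtain ⟨p, hp, hNp, hmod⟩ := Nat.exists_prime_gt_modEq_one (k := 4) N (by norm_num)
  haveI : Fact p.Prime := ⟨hp⟩
  have h4 : p % 4 = 1 := by
    have : p % 4 = 1 % 4 := hmod
    omega
  obtain ⟨q, hqodd, hqpos, hdvd, hndvd⟩ := exists_good_q p hp h4
  set x : G := QuotientGroup.mk (Units.mk0 ((q : ℚ) ^ 2 + 1) (by positivity)) with hx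
  have hxS : x ∈ S := ⟨q, hqodd, hqpos, rfl⟩
  -- the homomorphism
  set Ψ : G →* Multiplicative (ZMod 2) :=
    QuotientGroup.lift _ (valHom p) (valHom_ker p) with hΨ
  -- Ψ x = ofAdd 1
  have hval : padicValRat p (((Units.mk0 ((q : ℚ) ^ 2 + 1) (by positivity) : ℚˣ)) : ℚ) = 1 := by
    have hcast : ((Units.mk0 ((q : ℚ) ^ 2 + 1) (by positivity) : ℚˣ) : ℚ)
        = ((q ^ 2 + 1 : ℕ) : ℚ) := by push_cast; rfl
    rw [hcast, ← padicValRat_of_nat,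
      padicValNat_eq_one hp hdvd hndvd (by positivity)]
    norm_num
  have hΨx : Ψ x = Multiplicative.ofAdd (1 : ZMod 2) := by
    rw [hx]
    show valHom p _ = _
    show Multiplicative.ofAdd ((padicValRat p _ : ZMod 2)) = _
    rw [hval]
    norm_num
  -- but also Ψ x = ofAdd 0 via the out' representative
  have hΨx0 : Ψ x = Multiplicative.ofAdd (0 : ZMod 2) := by
    conv_lhs => rw [← QuotientGroup.out_eq' x]
    show Multiplicative.ofAdd ((padicValRat p ((x.out : ℚˣ) : ℚ) : ZMod 2)) = _
    have hfx : f x ≤ N := Finset.le_sup (hSfin.mem_toFinset.mpr hxS)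
    have hnum : ¬ (p : ℤ) ∣ ((x.out : ℚˣ) : ℚ).num := by
      rw [Int.natCast_dvd]
      refine Nat.not_dvd_of_pos_of_lt ?_ ?_
      · simpa [Int.natAbs_pos] using Rat.num_ne_zero.mpr (Units.ne_zero _)
      · simp only [hf] at hfx; omega
    have hden : ¬ p ∣ ((x.out : ℚˣ) : ℚ).den := by
      refine Nat.not_dvd_of_pos_of_lt ((x.out : ℚˣ) : ℚ).pos ?_
      · simp only [hf] at hfx; omega
    rw [padicValRat_def, padicValInt.eq_zero_of_not_dvd hnum,
      padicValNat.eq_zero_of_not_dvd hden]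
    norm_num
  rw [hΨx] at hΨx0
  have : (1 : ZMod 2) = 0 := by exact_mod_cast Multiplicative.ofAdd.injective hΨx0
  exact absurd this (by decide)
end
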